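/- Let F be a field of characteristic ≠ 2 with Witt ring W(F) and fundamental ideal I(F). In the ℤ⊕ℤ/2-graded ring W(F)[ξ,α]/(I(F)ξ, ξ^{p+1}, ξα, α²) with deg ξ = (1,1) and deg α = (p, p+1 mod 2), the homogeneous component of degree (i, i mod 2) for 1 ≤ i ≤ p−1 is isomorphic to W(F)/I(F) ≅ ℤ/2 generated by ξ^i, the component of degree (p, p+1 mod 2) is W(F)·α ≅ W(F), and all components in degrees (i, s) with i > p vanish. -/

import Mathlib

noncomputable section
open MvPolynomial

variable (W : Type) [CommRing W]

/-- The ideal `(Iξ, ξ^{p+1}, ξα, α²)` in `W[ξ,α]`. -/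
def I14 (I : Ideal W) (p : ℕ) : Ideal (MvPolynomial (Fin 2) W) :=
  Ideal.span ((fun c => C c * X 0) '' (I : Set W) ∪
    ({X 0 ^ (p + 1), X 0 * X 1, X 1 ^ 2} : Set (MvPolynomial (Fin 2) W)))

/-- `W[ξ,α]/(Iξ, ξ^{p+1}, ξα, α²)`, the (Fasel–Wendt) twisted I-cohomology ring of `ℙ^p`. -/
abbrev T14 (I : Ideal W) (p : ℕ) := MvPolynomial (Fin 2) W ⧸ I14 W I p

def xi14 (I : Ideal W) (p : ℕ) : T14 W I p := Ideal.Quotient.mk (I14 W I p) (X 0)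
def al14 (I : Ideal W) (p : ℕ) : T14 W I p := Ideal.Quotient.mk (I14 W I p) (X 1)



-- smul lemma
lemma smul_mk14 (I : Ideal W) (p : ℕ) (c : W) (q : MvPolynomial (Fin 2) W) :
    c • (Ideal.Quotient.mk (I14 W I p) q) = Ideal.Quotient.mk (I14 W I p) (C c * q) := by
  rw [← MvPolynomial.smul_eq_C_mul]
  rfl

-- membership of generators
lemma gen1 (I : Ideal W) (p : ℕ) (c : W) (hc : c ∈ I) : C c * X 0 ∈ I14 W I p :=
  Ideal.subset_span (Set.mem_union_left _ ⟨c, hc, rfl⟩)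

lemma gen2 (I : Ideal W) (p : ℕ) : (X 0 : MvPolynomial (Fin 2) W) ^ (p + 1) ∈ I14 W I p :=
  Ideal.subset_span (Set.mem_union_right _ (by simp))

lemma gen3 (I : Ideal W) (p : ℕ) : (X 0 : MvPolynomial (Fin 2) W) * X 1 ∈ I14 W I p :=
  Ideal.subset_span (Set.mem_union_right _ (by simp))

lemma gen4 (I : Ideal W) (p : ℕ) : (X 1 : MvPolynomial (Fin 2) W) ^ 2 ∈ I14 W I p :=
  Ideal.subset_span (Set.mem_union_right _ (by simp))

section Maps
variable (I : Ideal W) (p : ℕ) (e : (W ⧸ I) ≃+* ZMod 2)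

def Phi14 : MvPolynomial (Fin 2) W →+* Polynomial (ZMod 2) ⧸ Ideal.span {(Polynomial.X : Polynomial (ZMod 2)) ^ (p + 1)} :=
  eval₂Hom ((Ideal.Quotient.mk _).comp ((Polynomial.C).comp
      ((e : (W ⧸ I) →+* ZMod 2).comp (Ideal.Quotient.mk I))))
    ![Ideal.Quotient.mk _ Polynomial.X, 0]

lemma Phi14_ker : I14 W I p ≤ RingHom.ker (Phi14 W I p e) := by
  rw [I14, Ideal.span_le]
  rintro x (⟨c, hc, rfl⟩ | hx)
  · simp only [SetLike.mem_coe, RingHom.mem_ker, map_mul, Phi14, eval₂Hom_C]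
    have : Ideal.Quotient.mk I c = 0 := (Ideal.Quotient.eq_zero_iff_mem).2 hc
    simp [this]
  · simp only [Set.mem_insert_iff, Set.mem_singleton_iff] at hx
    rcases hx with rfl | rfl | rfl
    · simp only [SetLike.mem_coe, RingHom.mem_ker, map_pow, Phi14, eval₂Hom_X']
      rw [Matrix.cons_val_zero, ← map_pow, Ideal.Quotient.eq_zero_iff_mem]
      exact Ideal.subset_span rfl
    · simp [Phi14]
    · simp [Phi14]

def Psi14 (_I : Ideal W) (_p : ℕ) : MvPolynomial (Fin 2) W →+* DualNumber W :=
  eval₂Hom (TrivSqZeroExt.inlHom W W) ![0, DualNumber.eps]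

lemma Psi14_ker : I14 W I p ≤ RingHom.ker (Psi14 W I p) := by

  rw [I14, Ideal.span_le]
  rintro x (⟨c, hc, rfl⟩ | hx)
  · simp [Psi14]
  · simp only [Set.mem_insert_iff, Set.mem_singleton_iff] at hx
    rcases hx with rfl | rfl | rfl
    · simp [Psi14]
    · simp [Psi14]
    · simp only [SetLike.mem_coe, RingHom.mem_ker, map_pow, Psi14, eval₂Hom_X']
      rw [Matrix.cons_val_one, Matrix.cons_val_zero, sq, DualNumber.eps_mul_eps]

end Maps

-- kernel of toSpanSingleton at ξ^i
lemma ker_xi (I : Ideal W) (hWI : Nonempty ((W ⧸ I) ≃+* ZMod 2)) (p i : ℕ)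
    (hi1 : 1 ≤ i) (hip : i ≤ p) :
    LinearMap.ker (LinearMap.toSpanSingleton W (T14 W I p) (xi14 W I p ^ i)) = I := by
  obtain ⟨e⟩ := hWI
  ext c
  simp only [LinearMap.mem_ker, LinearMap.toSpanSingleton_apply]
  constructor
  · intro h
    rw [xi14, ← map_pow, smul_mk14, Ideal.Quotient.eq_zero_iff_mem] at h
    have h2 := Phi14_ker W I p e h
    rw [RingHom.mem_ker, map_mul, map_pow] at h2
    simp only [Phi14, eval₂Hom_C, eval₂Hom_X', Matrix.cons_val_zero,
      RingHom.comp_apply, RingEquiv.coe_toRingHom] at h2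
    rw [← map_pow, ← map_mul, Ideal.Quotient.eq_zero_iff_mem, Ideal.mem_span_singleton] at h2
    -- h2 : X^(p+1) ∣ C (e (mk c)) * X ^ i
    by_contra hcI
    have ha : (e (Ideal.Quotient.mk I c)) ≠ 0 := by
      intro h0
      exact hcI (Ideal.Quotient.eq_zero_iff_mem.1 (e.injective (by simpa using h0)))
    have hne : (Polynomial.C (e (Ideal.Quotient.mk I c)) * Polynomial.X ^ i : Polynomial (ZMod 2)) ≠ 0 := by
      simp [ha]
    have hdeg := Polynomial.natDegree_le_of_dvd h2 hne
    rw [Polynomial.natDegree_X_pow, Polynomial.natDegree_C_mul_X_pow i _ ha] at hdeg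
    omega
  · intro hc
    rw [xi14, ← map_pow, smul_mk14, Ideal.Quotient.eq_zero_iff_mem]
    obtain ⟨j, rfl⟩ : ∃ j, i = j + 1 := ⟨i - 1, by omega⟩
    rw [pow_succ', ← mul_assoc]
    exact Ideal.mul_mem_right _ _ (gen1 W I p c hc)

/-- let `F` be a field of characteristic `≠ 2` with Witt ring `W = W(F)` and
fundamental ideal `I = I(F)` (abstracted here as a commutative ring `W` with an ideal `I`
such that `W/I ≅ ℤ/2`).  In `W[ξ,α]/(Iξ, ξ^{p+1}, ξα, α²)` (`deg ξ = (1,1)`,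
`deg α = (p, p+1 mod 2)`), the homogeneous component of degree `(i, i mod 2)` for
`1 ≤ i ≤ p−1` is `W/I ≅ ℤ/2` generated by `ξ^i`, the component of degree `(p, p+1 mod 2)`
is `W·α ≅ W`, and all components in degrees `(i, s)` with `i > p` vanish. -/
theorem stmt_14 (F : Type) [Field F] (hF : ringChar F ≠ 2)
    (I : Ideal W) (hWI : Nonempty ((W ⧸ I) ≃+* ZMod 2)) (p : ℕ) (hp : 1 ≤ p) :
    (∀ i : ℕ, 1 ≤ i → i ≤ p - 1 →
      Nonempty ((Submodule.span W ({xi14 W I p ^ i} : Set (T14 W I p))) ≃ₗ[W] W ⧸ I)) ∧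
    Nonempty ((Submodule.span W ({al14 W I p} : Set (T14 W I p))) ≃ₗ[W] W) ∧
    (∀ i : ℕ, p < i → xi14 W I p ^ i = 0) ∧
    xi14 W I p * al14 W I p = 0 ∧
    al14 W I p ^ 2 = 0 := by
  refine ⟨?_, ?_, ?_, ?_, ?_⟩
  · intro i hi1 hi2
    set f := LinearMap.toSpanSingleton W (T14 W I p) (xi14 W I p ^ i)
    refine ⟨(LinearEquiv.ofEq _ _ (LinearMap.span_singleton_eq_range W _ _)).trans <|
      (f.quotKerEquivRange).symm.trans <|
      Submodule.quotEquivOfEq _ _ (ker_xi W I hWI p i hi1 (by omega))⟩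
  · set f := LinearMap.toSpanSingleton W (T14 W I p) (al14 W I p)
    have hinj : Function.Injective f := by
      intro a b hab
      have h : (a - b) • al14 W I p = 0 := by
        rw [sub_smul, sub_eq_zero]
        exact hab
      rw [al14, smul_mk14, Ideal.Quotient.eq_zero_iff_mem] at h
      have h2 := Psi14_ker W I p h
      rw [RingHom.mem_ker, map_mul] at h2
      simp only [Psi14, eval₂Hom_C, eval₂Hom_X', Matrix.cons_val_one, Matrix.head_cons] at h2
      rw [TrivSqZeroExt.inlHom_apply, DualNumber.eps, Matrix.cons_val_zero, TrivSqZeroExt.inl_mul_inr, smul_eq_mul,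
        mul_one] at h2
      have := TrivSqZeroExt.inr_injective (h2.trans (TrivSqZeroExt.inr_zero W).symm)
      exact sub_eq_zero.1 this
    refine ⟨(LinearEquiv.ofEq _ _ (LinearMap.span_singleton_eq_range W _ _)).trans
      (LinearEquiv.ofInjective f hinj).symm⟩
  · intro i hi
    rw [xi14, ← map_pow, Ideal.Quotient.eq_zero_iff_mem]
    have : (X 0 : MvPolynomial (Fin 2) W) ^ i = X 0 ^ (p + 1) * X 0 ^ (i - (p + 1)) := by
      rw [← pow_add]; congr 1; omega
    rw [this]
    exact Ideal.mul_mem_right _ _ (gen2 W I p)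
  · rw [xi14, al14, ← map_mul, Ideal.Quotient.eq_zero_iff_mem]
    exact gen3 W I p
  · rw [al14, ← map_pow, Ideal.Quotient.eq_zero_iff_mem]
    exact gen4 W I p
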